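/- Let $a<b$, $c<d$, and let $u \in C^1([a,b]\times[c,d])$ satisfy $u(a,y)=u(b,y)=0$ for all $y \in [c,d]$. Then $\int_c^d \int_a^b |\partial u/\partial x|\,dx\,dy \geq \frac{2}{b-a} \int_c^d \int_a^b |u(x,y)|\,dx\,dy$. -/

import Mathlib

open Set intervalIntegral MeasureTheory

lemma oned (a b : ℝ) (hab : a < b) (f f' : ℝ → ℝ)
    (hd : ∀ x ∈ Icc a b, HasDerivAt f (f' x) x)
    (hc' : ContinuousOn f' (Icc a b)) (ha0 : f a = 0) (hb0 : f b = 0) :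
    (2 / (b - a)) * ∫ x in a..b, |f x| ≤ ∫ x in a..b, |f' x| := by
  set C := ∫ x in a..b, |f' x| with hC
  have habs : ContinuousOn (fun x => |f' x|) (Icc a b) := hc'.abs
  have hint' : ∀ x ∈ Icc a b, ∀ y ∈ Icc a b, IntervalIntegrable f' volume x y := by
    intro x hx y hy
    exact (hc'.mono (uIcc_subset_Icc hx hy)).intervalIntegrable
  have hintabs : ∀ x ∈ Icc a b, ∀ y ∈ Icc a b,
      IntervalIntegrable (fun t => |f' t|) volume x y := by
    intro x hx y hy
    exact (habs.mono (uIcc_subset_Icc hx hy)).intervalIntegrable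
  have haI : a ∈ Icc a b := ⟨le_refl _, hab.le⟩
  have hbI : b ∈ Icc a b := ⟨hab.le, le_refl _⟩
  have key : ∀ x ∈ Icc a b, 2 * |f x| ≤ C := by
    intro x hx
    have h1 : ∫ t in a..x, f' t = f x - f a :=
      intervalIntegral.integral_eq_sub_of_hasDerivAt
        (fun t ht => hd t (uIcc_subset_Icc haI hx ht)) (hint' a haI x hx)
    have h2 : ∫ t in x..b, f' t = f b - f x :=
      intervalIntegral.integral_eq_sub_of_hasDerivAt
        (fun t ht => hd t (uIcc_subset_Icc hx hbI ht)) (hint' x hx b hbI)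
    have e1 : |f x| ≤ ∫ t in a..x, |f' t| := by
      calc |f x| = |∫ t in a..x, f' t| := by rw [h1, ha0, sub_zero]
        _ ≤ ∫ t in a..x, |f' t| :=
          intervalIntegral.abs_integral_le_integral_abs hx.1
    have e2 : |f x| ≤ ∫ t in x..b, |f' t| := by
      calc |f x| = |∫ t in x..b, f' t| := by rw [h2, hb0, zero_sub, abs_neg]
        _ ≤ ∫ t in x..b, |f' t| :=
          intervalIntegral.abs_integral_le_integral_abs hx.2
    have hsum : (∫ t in a..x, |f' t|) + ∫ t in x..b, |f' t| = C :=
      intervalIntegral.integral_add_adjacent_intervals (hintabs a haI x hx) (hintabs x hx b hbI)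
    linarith
  have hf_cont : ContinuousOn (fun x => |f x|) (Icc a b) := by
    apply ContinuousOn.abs
    intro x hx
    exact ((hd x hx).continuousAt).continuousWithinAt
  have hmono : ∫ x in a..b, 2 * |f x| ≤ ∫ x in a..b, C := by
    apply intervalIntegral.integral_mono_on hab.le
    · exact ((hf_cont.mono (by rw [uIcc_of_le hab.le] : uIcc a b ⊆ Icc a b)).intervalIntegrable).const_mul 2
    · exact intervalIntegrable_const
    · intro x hx; exact key x hx
  rw [intervalIntegral.integral_const, intervalIntegral.integral_const_mul, smul_eq_mul] at hmono
  rw [div_mul_eq_mul_div, div_le_iff₀ (by linarith)]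
  nlinarith

lemma contparam (a b c d : ℝ) (hab : a ≤ b) (f : ℝ → ℝ → ℝ)
    (hf : ContinuousOn (fun p : ℝ × ℝ => f p.1 p.2) (Icc a b ×ˢ Icc c d)) :
    ContinuousOn (fun y => ∫ x in a..b, |f x y|) (Icc c d) := by
  obtain ⟨M, hM⟩ := (isCompact_Icc.prod isCompact_Icc).exists_bound_of_continuousOn hf
  intro y₀ hy₀
  have hIoc : uIoc a b ⊆ Icc a b := by
    rw [uIoc_of_le hab]; exact Ioc_subset_Icc_self
  apply intervalIntegral.continuousWithinAt_of_dominated_interval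
    (bound := fun _ => M)
  · filter_upwards [self_mem_nhdsWithin] with y hy
    apply ContinuousOn.aestronglyMeasurable _ measurableSet_uIoc
    apply ContinuousOn.mono _ hIoc
    apply ContinuousOn.abs
    exact hf.comp (Continuous.continuousOn (by fun_prop))
      (fun x hx => Set.mk_mem_prod hx hy)
  · filter_upwards [self_mem_nhdsWithin] with y hy
    filter_upwards with t ht
    simpa using hM (t, y) (Set.mk_mem_prod (hIoc ht) hy)
  · exact intervalIntegrable_const
  · filter_upwards with t ht
    apply ContinuousWithinAt.abs
    exact (hf ((t, y₀)) (Set.mk_mem_prod (hIoc ht) hy₀)).comp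
      (Continuous.continuousWithinAt (by fun_prop))
      (fun y hy => Set.mk_mem_prod (hIoc ht) hy)

theorem stmt_0 (a b c d : ℝ) (hab : a < b) (hcd : c < d)
    (u ux : ℝ → ℝ → ℝ)
    (hderiv : ∀ y ∈ Icc c d, ∀ x ∈ Icc a b, HasDerivAt (fun x => u x y) (ux x y) x)
    (hcont : ContinuousOn (fun p : ℝ × ℝ => u p.1 p.2) (Icc a b ×ˢ Icc c d))
    (hcont' : ContinuousOn (fun p : ℝ × ℝ => ux p.1 p.2) (Icc a b ×ˢ Icc c d))
    (hzero : ∀ y ∈ Icc c d, u a y = 0 ∧ u b y = 0) :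
    (∫ y in c..d, ∫ x in a..b, |ux x y|) ≥
      (2 / (b - a)) * ∫ y in c..d, ∫ x in a..b, |u x y| := by
  have hF := contparam a b c d hab.le ux hcont'
  have hG := contparam a b c d hab.le u hcont
  rw [ge_iff_le, ← intervalIntegral.integral_const_mul]
  apply intervalIntegral.integral_mono_on hcd.le
  · exact ((hG.mono (by rw [uIcc_of_le hcd.le] :
      uIcc c d ⊆ Icc c d)).intervalIntegrable).const_mul _
  · exact (hF.mono (by rw [uIcc_of_le hcd.le] : uIcc c d ⊆ Icc c d)).intervalIntegrable
  · intro y hy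
    have hc1 : ContinuousOn (fun x => ux x y) (Icc a b) :=
      hcont'.comp ((continuous_id.prodMk continuous_const).continuousOn)
        (fun z hz => Set.mk_mem_prod hz hy)
    exact oned a b hab (fun x => u x y) (fun x => ux x y) (hderiv y hy)
      hc1 (hzero y hy).1 (hzero y hy).2
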